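/- arXiv:1111.2401 — 2 statements merged into one kernel-verified Lean document; each statement's English description precedes it below -/
import Mathlib

section
/- Let G be a linearly ordered group and let 𝔠_mg be the relation on S_G defined by x 𝔠_mg y iff there exists an idempotent z of S_G with x·z = y·z. Then: (1) (a,b) 𝔠_mg (c,d) holds if and only if b⁻¹·a = d⁻¹·c; (2) the map f : S_G → G, (a,b) ↦ b⁻¹·a, is a surjective antihomomorphism, i.e. f(x·y) = f(y)·f(x); consequently 𝔠_mg is a group congruence on S_G (the least group congruence) and the quotient S_G/𝔠_mg is antiisomorphic to the group G. The same statements hold for S_G⁺. -/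
variable {G : Type*} [Group G] [LinearOrder G]
  [CovariantClass G G (· * ·) (· ≤ ·)] [CovariantClass G G (Function.swap (· * ·)) (· ≤ ·)]

/-- The multiplication of the semigroup `S_G` on `G × G`:
`(a,b)·(c,d) = (c·b⁻¹·a, d)` if `b < c`; `(a,d)` if `b = c`; `(a, b·c⁻¹·d)` if `b > c`. -/
def Smul (x y : G × G) : G × G :=
  if x.2 < y.1 then (y.1 * x.2⁻¹ * x.1, y.2)
  else if x.2 = y.1 then (x.1, y.2)
  else (x.1, x.2 * y.1⁻¹ * y.2)

/-- The carrier of the semigroup `S_G⁺` on the positive cone `G⁺ = {x | 1 ≤ x}`. -/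
abbrev PosS (G : Type*) [Group G] [LinearOrder G] : Type _ :=
  {p : G × G // 1 ≤ p.1 ∧ 1 ≤ p.2}

theorem smul_mem {x y : G × G} (hx : 1 ≤ x.1 ∧ 1 ≤ x.2) (hy : 1 ≤ y.1 ∧ 1 ≤ y.2) :
    1 ≤ (Smul x y).1 ∧ 1 ≤ (Smul x y).2 := by
  unfold Smul
  split_ifs with h1 h2
  · refine ⟨?_, hy.2⟩
    have h3 : (1 : G) ≤ y.1 * x.2⁻¹ := by
      have h4 : x.2 * x.2⁻¹ ≤ y.1 * x.2⁻¹ := by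
        have := h1.le
        gcongr
      rwa [mul_inv_cancel] at h4
    exact one_le_mul h3 hx.1
  · exact ⟨hx.1, hy.2⟩
  · refine ⟨hx.1, ?_⟩
    have h3 : (1 : G) ≤ x.2 * y.1⁻¹ := by
      have h4 : y.1 * y.1⁻¹ ≤ x.2 * y.1⁻¹ := by
        have := not_lt.mp h1
        gcongr
      rwa [mul_inv_cancel] at h4
    exact one_le_mul h3 hy.2

/-- The multiplication of the semigroup `S_G⁺`. -/
def SmulP (x y : PosS G) : PosS G := ⟨Smul x.1 y.1, smul_mem x.2 y.2⟩

/-- `c` is a congruence on the semigroup `(S, m)` : an equivalence relation compatible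
with multiplication on both sides. -/
def IsSgCongruence {S : Type*} (m : S → S → S) (c : S → S → Prop) : Prop :=
  Equivalence c ∧ ∀ x y s : S, c x y → c (m s x) (m s y) ∧ c (m x s) (m y s)

/-- `c` differs from both the identity relation and the universal relation. -/
def IsNontrivialRel {S : Type*} (c : S → S → Prop) : Prop :=
  (∃ x y : S, c x y ∧ x ≠ y) ∧ ∃ x y : S, ¬c x y

/-- The quotient of the semigroup `(S, m)` by the congruence `c` is a group:
there is a class acting as a two-sided identity and every class has a two-sided inverse. -/
def IsGroupCongruence {S : Type*} (m : S → S → S) (c : S → S → Prop) : Prop :=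
  ∃ e : S, (∀ x : S, c (m e x) x ∧ c (m x e) x) ∧ ∀ x : S, ∃ y : S, c (m x y) e ∧ c (m y x) e

/-- The least group congruence `𝔠_mg` on `S_G`: `x 𝔠_mg y` iff `x·z = y·z` for some
idempotent `z`. -/
def cmgS (x y : G × G) : Prop := ∃ z : G × G, Smul z z = z ∧ Smul x z = Smul y z

/-- The least group congruence `𝔠_mg` on `S_G⁺`. -/
def cmgSP (x y : PosS G) : Prop := ∃ z : PosS G, SmulP z z = z ∧ SmulP x z = SmulP y z


lemma smul_eq (x y : G × G) :
    Smul x y = (max x.2 y.1 * x.2⁻¹ * x.1, max x.2 y.1 * y.1⁻¹ * y.2) := by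
  unfold Smul
  rcases lt_trichotomy x.2 y.1 with h | h | h
  · rw [if_pos h, max_eq_right h.le, mul_inv_cancel, one_mul]
  · rw [if_neg (by simp [h]), if_pos h, h, max_self, mul_inv_cancel, one_mul, one_mul]
  · rw [if_neg (not_lt.2 h.le), if_neg h.ne', max_eq_left h.le, mul_inv_cancel, one_mul]

lemma f_smul (x y : G × G) :
    (Smul x y).2⁻¹ * (Smul x y).1 = (y.2⁻¹ * y.1) * (x.2⁻¹ * x.1) := by
  rw [smul_eq]
  simp [mul_inv_rev, mul_assoc]

lemma key_max (b c d p : G) :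
    max (max b c * c⁻¹ * d) p = max b (max d p * d⁻¹ * c) * c⁻¹ * d := by
  rw [mul_assoc (max b c), ← max_mul_mul_right, mul_assoc (max d p), ← max_mul_mul_right,
    mul_inv_cancel_left, ← max_mul_mul_right]
  simp [mul_assoc, max_assoc]

lemma Smul_assoc (x y z : G × G) : Smul (Smul x y) z = Smul x (Smul y z) := by
  simp only [smul_eq]
  obtain ⟨a, b⟩ := x; obtain ⟨c, d⟩ := y; obtain ⟨p, q⟩ := z
  simp only [Prod.mk.injEq]
  constructor
  · rw [key_max b c d p]; group
  · rw [key_max b c d p]; group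

lemma SmulP_assoc (x y z : PosS G) : SmulP (SmulP x y) z = SmulP x (SmulP y z) :=
  Subtype.ext (Smul_assoc x.1 y.1 z.1)

lemma cmgS_iff (x y : G × G) : cmgS x y ↔ x.2⁻¹ * x.1 = y.2⁻¹ * y.1 := by
  constructor
  · rintro ⟨z, _, hz⟩
    have h1 := f_smul x z
    have h2 := f_smul y z
    rw [hz, h2] at h1
    exact (mul_left_cancel h1).symm
  · intro h
    set m := max x.2 y.2 with hm
    refine ⟨(m, m), ?_, ?_⟩
    · unfold Smul; simp
    · rw [smul_eq, smul_eq]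
      simp only [max_eq_right (le_max_left x.2 y.2 : x.2 ≤ m),
        max_eq_right (le_max_right x.2 y.2 : y.2 ≤ m)]
      simp [mul_assoc, h]
      rw [max_eq_right (le_max_left x.2 y.2 : x.2 ≤ m), max_eq_right (le_max_right x.2 y.2 : y.2 ≤ m)]

lemma cmgSP_iff (x y : PosS G) : cmgSP x y ↔ x.1.2⁻¹ * x.1.1 = y.1.2⁻¹ * y.1.1 := by
  constructor
  · rintro ⟨z, _, hz⟩
    have h1 := f_smul x.1 z.1
    have h2 := f_smul y.1 z.1
    have hz' : Smul x.1 z.1 = Smul y.1 z.1 := congrArg Subtype.val hz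
    rw [hz', h2] at h1
    exact (mul_left_cancel h1).symm
  · intro h
    set m := max x.1.2 y.1.2 with hm
    have hm1 : (1:G) ≤ m := le_trans x.2.2 (le_max_left _ _)
    refine ⟨⟨(m, m), hm1, hm1⟩, ?_, ?_⟩
    · apply Subtype.ext; unfold SmulP Smul; simp
    · apply Subtype.ext
      show Smul x.1 (m, m) = Smul y.1 (m, m)
      rw [smul_eq, smul_eq]
      simp only [max_eq_right (le_max_left x.1.2 y.1.2 : x.1.2 ≤ m),
        max_eq_right (le_max_right x.1.2 y.1.2 : y.1.2 ≤ m)]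
      simp [mul_assoc, h]
      rw [max_eq_right (le_max_left x.1.2 y.1.2 : x.1.2 ≤ m),
        max_eq_right (le_max_right x.1.2 y.1.2 : y.1.2 ≤ m)]

lemma least_aux {S : Type*} (m : S → S → S) (assoc : ∀ a b c : S, m (m a b) c = m a (m b c))
    (c : S → S → Prop) (hc : IsSgCongruence m c) (hg : IsGroupCongruence m c)
    (x y z : S) (hz : m x z = m y z) (hzz : m z z = z) : c x y := by
  obtain ⟨hequiv, hcomp⟩ := hc
  obtain ⟨e, he, hinv⟩ := hg
  obtain ⟨w, hw1, _⟩ := hinv z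
  have h1 : c (m x (m z w)) (m x e) := (hcomp _ _ x hw1).1
  have h2 : c (m y (m z w)) (m y e) := (hcomp _ _ y hw1).1
  rw [← assoc, hz, assoc] at h1
  have h3 : c (m x e) (m y e) := hequiv.trans (hequiv.symm h1) h2
  exact hequiv.trans (hequiv.symm (he x).2) (hequiv.trans h3 (he y).2)

lemma fP_smul (x y : PosS G) :
    (SmulP x y).1.2⁻¹ * (SmulP x y).1.1 = (y.1.2⁻¹ * y.1.1) * (x.1.2⁻¹ * x.1.1) :=
  f_smul x.1 y.1

lemma exists_posS (g : G) : ∃ y : PosS G, y.1.2⁻¹ * y.1.1 = g := by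
  rcases le_total 1 g with h | h
  · exact ⟨⟨(g, 1), h, le_refl 1⟩, by simp⟩
  · exact ⟨⟨(1, g⁻¹), le_refl 1, one_le_inv'.mpr h⟩, by simp⟩

/-- For a linearly ordered group `G`: `(a,b) 𝔠_mg (c,d)` iff `b⁻¹·a = d⁻¹·c`; the map
`f : (a,b) ↦ b⁻¹·a` is a surjective antihomomorphism of `S_G` onto `G`; consequently
`𝔠_mg` is a group congruence on `S_G` — indeed the least one — and, since the fibres of
`f` are exactly the `𝔠_mg`-classes, the quotient `S_G/𝔠_mg` is antiisomorphic to `G`.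
The same statements hold for `S_G⁺`. -/
theorem stmt17 {G : Type*} [Group G] [LinearOrder G]
    [CovariantClass G G (· * ·) (· ≤ ·)]
    [CovariantClass G G (Function.swap (· * ·)) (· ≤ ·)] :
    ((∀ a b c d : G, cmgS (a, b) (c, d) ↔ b⁻¹ * a = d⁻¹ * c) ∧
      (Function.Surjective (fun x : G × G => x.2⁻¹ * x.1) ∧
        ∀ x y : G × G, (Smul x y).2⁻¹ * (Smul x y).1 = (y.2⁻¹ * y.1) * (x.2⁻¹ * x.1)) ∧
      IsSgCongruence (Smul (G := G)) cmgS ∧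
      IsGroupCongruence (Smul (G := G)) cmgS ∧
      (∀ c : (G × G) → (G × G) → Prop,
        IsSgCongruence (Smul (G := G)) c → IsGroupCongruence (Smul (G := G)) c →
          ∀ x y : G × G, cmgS x y → c x y) ∧
      (∀ x y : G × G, x.2⁻¹ * x.1 = y.2⁻¹ * y.1 ↔ cmgS x y)) ∧
    ((∀ x y : PosS G, cmgSP x y ↔ x.1.2⁻¹ * x.1.1 = y.1.2⁻¹ * y.1.1) ∧
      (Function.Surjective (fun x : PosS G => x.1.2⁻¹ * x.1.1) ∧
        ∀ x y : PosS G,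
          (SmulP x y).1.2⁻¹ * (SmulP x y).1.1 = (y.1.2⁻¹ * y.1.1) * (x.1.2⁻¹ * x.1.1)) ∧
      IsSgCongruence (SmulP (G := G)) cmgSP ∧
      IsGroupCongruence (SmulP (G := G)) cmgSP ∧
      (∀ c : PosS G → PosS G → Prop,
        IsSgCongruence (SmulP (G := G)) c → IsGroupCongruence (SmulP (G := G)) c →
          ∀ x y : PosS G, cmgSP x y → c x y) ∧
      (∀ x y : PosS G, x.1.2⁻¹ * x.1.1 = y.1.2⁻¹ * y.1.1 ↔ cmgSP x y)) := by
  constructor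
  · refine ⟨fun a b c d => cmgS_iff (a, b) (c, d), ⟨fun g => ⟨(g, 1), by simp⟩, f_smul⟩,
      ?_, ?_, ?_, fun x y => (cmgS_iff x y).symm⟩
    · refine ⟨⟨fun x => (cmgS_iff x x).2 rfl,
        fun h => (cmgS_iff _ _).2 ((cmgS_iff _ _).1 h).symm,
        fun h1 h2 => (cmgS_iff _ _).2 (((cmgS_iff _ _).1 h1).trans ((cmgS_iff _ _).1 h2))⟩, ?_⟩
      intro x y s h
      have h' := (cmgS_iff x y).1 h
      exact ⟨(cmgS_iff _ _).2 (by rw [f_smul, f_smul, h']),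
        (cmgS_iff _ _).2 (by rw [f_smul, f_smul, h'])⟩
    · refine ⟨(1, 1), fun x => ⟨?_, ?_⟩, fun x => ⟨(x.1⁻¹ * x.2, 1), ?_, ?_⟩⟩ <;>
        · rw [cmgS_iff, f_smul]; simp [mul_assoc]
    · rintro c hsg hgc x y ⟨z, hzz, hxy⟩
      exact least_aux Smul Smul_assoc c hsg hgc x y z hxy hzz
  · refine ⟨cmgSP_iff, ⟨fun g => ?_, fP_smul⟩, ?_, ?_, ?_, fun x y => (cmgSP_iff x y).symm⟩
    · obtain ⟨y, hy⟩ := exists_posS g; exact ⟨y, hy⟩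
    · refine ⟨⟨fun x => (cmgSP_iff x x).2 rfl,
        fun h => (cmgSP_iff _ _).2 ((cmgSP_iff _ _).1 h).symm,
        fun h1 h2 => (cmgSP_iff _ _).2 (((cmgSP_iff _ _).1 h1).trans ((cmgSP_iff _ _).1 h2))⟩, ?_⟩
      intro x y s h
      have h' := (cmgSP_iff x y).1 h
      exact ⟨(cmgSP_iff _ _).2 (by rw [fP_smul, fP_smul, h']),
        (cmgSP_iff _ _).2 (by rw [fP_smul, fP_smul, h'])⟩
    · refine ⟨⟨(1, 1), le_refl 1, le_refl 1⟩, fun x => ⟨?_, ?_⟩, fun x => ?_⟩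
      · rw [cmgSP_iff, fP_smul]; simp
      · rw [cmgSP_iff, fP_smul]; simp
      · obtain ⟨y, hy⟩ := exists_posS (x.1.1⁻¹ * x.1.2)
        refine ⟨y, ?_, ?_⟩ <;>
          · rw [cmgSP_iff, fP_smul, hy]; simp [mul_assoc]
    · rintro c hsg hgc x y ⟨z, hzz, hxy⟩
      exact least_aux SmulP SmulP_assoc c hsg hgc x y z hxy hzz
end

section
/- Let G be a linearly ordered d-group and let 𝔠_mg be the least group congruence on T_G (given by x 𝔠_mg y iff x·z = y·z for some idempotent z of T_G). Then (a,b,s) 𝔠_mg (c,d,t) holds if and only if b⁻¹·a = d⁻¹·c; the map (a,b,s) ↦ b⁻¹·a is a surjective antihomomorphism from T_G onto G, so the quotient T_G/𝔠_mg is antiisomorphic to G; and if in addition G is archimedean then T_G/𝔠_mg is isomorphic to G. The same statements hold for T_G⁺. -/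
variable {G : Type*} [Group G] [LinearOrder G]
  [CovariantClass G G (· * ·) (· ≤ ·)] [CovariantClass G G (Function.swap (· * ·)) (· ≤ ·)]

/-- The multiplication of the semigroup `T_G` on `G × G × {0,1}` (with `{0,1}` modelled
by `Bool`, `0 = false < 1 = true`): `(g,h,s)·(k,l,t) = ((h∨k)·h⁻¹·g, (h∨k)·k⁻¹·l, r)`
where `r = t` if `h < k`, `r = s` if `h > k`, and `r = min s t` if `h = k`. -/
def Tmul (x y : G × G × Bool) : G × G × Bool :=
  (max x.2.1 y.1 * x.2.1⁻¹ * x.1,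
   max x.2.1 y.1 * y.1⁻¹ * y.2.1,
   if x.2.1 < y.1 then y.2.2 else if y.1 < x.2.1 then x.2.2 else min x.2.2 y.2.2)

/-- The carrier of the semigroup `T_G⁺` on the positive cone. -/
abbrev PosT (G : Type*) [Group G] [LinearOrder G] : Type _ :=
  {x : G × G × Bool // 1 ≤ x.1 ∧ 1 ≤ x.2.1}

theorem tmul_mem {x y : G × G × Bool} (hx : 1 ≤ x.1 ∧ 1 ≤ x.2.1) (hy : 1 ≤ y.1 ∧ 1 ≤ y.2.1) :
    1 ≤ (Tmul x y).1 ∧ 1 ≤ (Tmul x y).2.1 := by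
  unfold Tmul
  refine ⟨one_le_mul ?_ hx.1, one_le_mul ?_ hy.2⟩
  · have h4 := mul_le_mul' (le_max_left x.2.1 y.1) (le_refl x.2.1⁻¹)
    rwa [mul_inv_cancel] at h4
  · have h4 := mul_le_mul' (le_max_right x.2.1 y.1) (le_refl y.1⁻¹)
    rwa [mul_inv_cancel] at h4

/-- The multiplication of the semigroup `T_G⁺`. -/
def TmulP (x y : PosT G) : PosT G := ⟨Tmul x.1 y.1, tmul_mem x.2 y.2⟩

/-- A linearly ordered group is archimedean if for all `1 < a` and `1 < b` there are
positive integers `m`, `n` with `b ≤ a ^ m` and `a ≤ b ^ n`. -/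
def IsArchGroup (G : Type*) [Group G] [LinearOrder G] : Prop :=
  ∀ a b : G, 1 < a → 1 < b →
    (∃ m : ℕ, 0 < m ∧ b ≤ a ^ m) ∧ ∃ n : ℕ, 0 < n ∧ a ≤ b ^ n

/-- The least group congruence `𝔠_mg` on `T_G`: `x 𝔠_mg y` iff `x·z = y·z` for some
idempotent `z`. -/
def cmgT (x y : G × G × Bool) : Prop :=
  ∃ z : G × G × Bool, Tmul z z = z ∧ Tmul x z = Tmul y z

/-- The least group congruence `𝔠_mg` on `T_G⁺`. -/
def cmgTP (x y : PosT G) : Prop := ∃ z : PosT G, TmulP z z = z ∧ TmulP x z = TmulP y z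

section Aux

set_option linter.unusedSectionVars false

lemma phi_anti (x y : G × G × Bool) :
    (Tmul x y).2.1⁻¹ * (Tmul x y).1 = (y.2.1⁻¹ * y.1) * (x.2.1⁻¹ * x.1) := by
  simp only [Tmul]
  group

lemma tmul_special (x : G × G × Bool) (M : G) (hM : x.2.1 ≤ M) :
    Tmul x (M, M, false) = (M * x.2.1⁻¹ * x.1, M, false) := by
  simp only [Tmul]
  rw [max_eq_right hM]
  refine Prod.ext rfl (Prod.ext (by group) ?_)
  rcases lt_or_eq_of_le hM with h | h
  · simp [h]
  · simp [h, lt_irrefl]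

lemma cmgT_iff' (x y : G × G × Bool) :
    cmgT x y ↔ x.2.1⁻¹ * x.1 = y.2.1⁻¹ * y.1 := by
  constructor
  · rintro ⟨z, hz, h⟩
    have h2 := phi_anti z z
    rw [hz] at h2
    have h1 : z.2.1⁻¹ * z.1 = 1 :=
      (mul_left_cancel (a := z.2.1⁻¹ * z.1) (by rw [mul_one]; exact h2)).symm
    have hx := phi_anti x z
    rw [h, phi_anti y z, h1, one_mul, one_mul] at hx
    exact hx.symm
  · intro h
    refine ⟨(max x.2.1 y.2.1, max x.2.1 y.2.1, false), ?_, ?_⟩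
    · rw [tmul_special _ _ le_rfl]
      simp
    · rw [tmul_special _ _ (le_max_left _ _), tmul_special _ _ (le_max_right _ _),
        mul_assoc, mul_assoc, h]

lemma cmgTP_iff' (x y : PosT G) :
    cmgTP x y ↔ x.1.2.1⁻¹ * x.1.1 = y.1.2.1⁻¹ * y.1.1 := by
  constructor
  · rintro ⟨z, hz, h⟩
    have hz' : Tmul z.1 z.1 = z.1 := congrArg Subtype.val hz
    have h' : Tmul x.1 z.1 = Tmul y.1 z.1 := congrArg Subtype.val h
    have h2 := phi_anti z.1 z.1
    rw [hz'] at h2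
    have h1 : z.1.2.1⁻¹ * z.1.1 = 1 :=
      (mul_left_cancel (a := z.1.2.1⁻¹ * z.1.1) (by rw [mul_one]; exact h2)).symm
    have hx := phi_anti x.1 z.1
    rw [h', phi_anti y.1 z.1, h1, one_mul, one_mul] at hx
    exact hx.symm
  · intro h
    have hM : (1 : G) ≤ max x.1.2.1 y.1.2.1 := le_trans x.2.2 (le_max_left _ _)
    refine ⟨⟨(max x.1.2.1 y.1.2.1, max x.1.2.1 y.1.2.1, false), hM, hM⟩, ?_, ?_⟩
    · apply Subtype.ext
      show Tmul _ _ = _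
      rw [tmul_special _ _ le_rfl]
      simp
    · apply Subtype.ext
      show Tmul x.1 _ = Tmul y.1 _
      rw [tmul_special _ _ (le_max_left _ _), tmul_special _ _ (le_max_right _ _),
        mul_assoc, mul_assoc, h]

lemma phi_surj : Function.Surjective (fun x : G × G × Bool => x.2.1⁻¹ * x.1) := by
  intro g
  exact ⟨(g, 1, false), by simp⟩

lemma phiP_surj : Function.Surjective (fun x : PosT G => x.1.2.1⁻¹ * x.1.1) := by
  intro g
  rcases le_total 1 g with h | h
  · exact ⟨⟨(g, 1, false), h, le_refl 1⟩, by simp⟩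
  · exact ⟨⟨(1, g⁻¹, false), le_refl 1, one_le_inv'.mpr h⟩, by simp⟩

end Aux

/-- For a linearly ordered `d`-group `G`: `(a,b,s) 𝔠_mg (c,d,t)` iff `b⁻¹·a = d⁻¹·c`;
the map `(a,b,s) ↦ b⁻¹·a` is a surjective antihomomorphism of `T_G` onto `G` whose
fibres are exactly the `𝔠_mg`-classes, so `T_G/𝔠_mg` is antiisomorphic to `G`; and if
`G` is moreover archimedean then `T_G/𝔠_mg` is isomorphic to `G`. The same statements
hold for `T_G⁺`. -/
theorem stmt19 {G : Type*} [Group G] [LinearOrder G]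
    [CovariantClass G G (· * ·) (· ≤ ·)]
    [CovariantClass G G (Function.swap (· * ·)) (· ≤ ·)]
    (hd : ∀ g : G, 1 < g → ∃ x : G, 1 < x ∧ x < g) :
    ((∀ (a b c d : G) (s t : Bool), cmgT (a, b, s) (c, d, t) ↔ b⁻¹ * a = d⁻¹ * c) ∧
      (Function.Surjective (fun x : G × G × Bool => x.2.1⁻¹ * x.1) ∧
        ∀ x y : G × G × Bool,
          (Tmul x y).2.1⁻¹ * (Tmul x y).1 = (y.2.1⁻¹ * y.1) * (x.2.1⁻¹ * x.1)) ∧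
      (∀ x y : G × G × Bool, x.2.1⁻¹ * x.1 = y.2.1⁻¹ * y.1 ↔ cmgT x y) ∧
      (IsArchGroup G →
        ∃ f : G × G × Bool → G, Function.Surjective f ∧
          (∀ x y, f (Tmul x y) = f x * f y) ∧ ∀ x y, f x = f y ↔ cmgT x y)) ∧
    ((∀ x y : PosT G, cmgTP x y ↔ x.1.2.1⁻¹ * x.1.1 = y.1.2.1⁻¹ * y.1.1) ∧
      (Function.Surjective (fun x : PosT G => x.1.2.1⁻¹ * x.1.1) ∧
        ∀ x y : PosT G,
          (TmulP x y).1.2.1⁻¹ * (TmulP x y).1.1 =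
            (y.1.2.1⁻¹ * y.1.1) * (x.1.2.1⁻¹ * x.1.1)) ∧
      (∀ x y : PosT G, x.1.2.1⁻¹ * x.1.1 = y.1.2.1⁻¹ * y.1.1 ↔ cmgTP x y) ∧
      (IsArchGroup G →
        ∃ f : PosT G → G, Function.Surjective f ∧
          (∀ x y, f (TmulP x y) = f x * f y) ∧ ∀ x y, f x = f y ↔ cmgTP x y)) := by
  constructor
  · refine ⟨fun a b c d s t => (cmgT_iff' _ _), ⟨phi_surj, phi_anti⟩,
      fun x y => (cmgT_iff' x y).symm, fun _ => ?_⟩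
    refine ⟨fun x => x.1⁻¹ * x.2.1, ?_, ?_, ?_⟩
    · intro g
      obtain ⟨x, hx⟩ := phi_surj (G := G) g⁻¹
      refine ⟨x, ?_⟩
      show x.1⁻¹ * x.2.1 = g
      have hx' : x.2.1⁻¹ * x.1 = g⁻¹ := hx
      rw [show x.1⁻¹ * x.2.1 = (x.2.1⁻¹ * x.1)⁻¹ by group, hx', inv_inv]
    · intro x y
      calc (Tmul x y).1⁻¹ * (Tmul x y).2.1
          = ((Tmul x y).2.1⁻¹ * (Tmul x y).1)⁻¹ := by group
        _ = ((y.2.1⁻¹ * y.1) * (x.2.1⁻¹ * x.1))⁻¹ := congrArg Inv.inv (phi_anti x y)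
        _ = (x.1⁻¹ * x.2.1) * (y.1⁻¹ * y.2.1) := by group
    · intro x y
      rw [cmgT_iff']
      constructor
      · intro h
        have h2 : (x.1⁻¹ * x.2.1)⁻¹ = (y.1⁻¹ * y.2.1)⁻¹ := congrArg Inv.inv h
        calc x.2.1⁻¹ * x.1 = (x.1⁻¹ * x.2.1)⁻¹ := by group
          _ = (y.1⁻¹ * y.2.1)⁻¹ := h2
          _ = y.2.1⁻¹ * y.1 := by group
      · intro h
        have h2 : (x.2.1⁻¹ * x.1)⁻¹ = (y.2.1⁻¹ * y.1)⁻¹ := congrArg Inv.inv h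
        calc x.1⁻¹ * x.2.1 = (x.2.1⁻¹ * x.1)⁻¹ := by group
          _ = (y.2.1⁻¹ * y.1)⁻¹ := h2
          _ = y.1⁻¹ * y.2.1 := by group
  · have panti : ∀ x y : PosT G,
        (TmulP x y).1.2.1⁻¹ * (TmulP x y).1.1 =
          (y.1.2.1⁻¹ * y.1.1) * (x.1.2.1⁻¹ * x.1.1) := fun x y => phi_anti x.1 y.1
    refine ⟨fun x y => cmgTP_iff' x y, ⟨phiP_surj, panti⟩,
      fun x y => (cmgTP_iff' x y).symm, fun _ => ?_⟩
    refine ⟨fun x => x.1.1⁻¹ * x.1.2.1, ?_, ?_, ?_⟩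
    · intro g
      obtain ⟨x, hx⟩ := phiP_surj (G := G) g⁻¹
      refine ⟨x, ?_⟩
      show x.1.1⁻¹ * x.1.2.1 = g
      have hx' : x.1.2.1⁻¹ * x.1.1 = g⁻¹ := hx
      rw [show x.1.1⁻¹ * x.1.2.1 = (x.1.2.1⁻¹ * x.1.1)⁻¹ by group, hx', inv_inv]
    · intro x y
      calc (TmulP x y).1.1⁻¹ * (TmulP x y).1.2.1
          = ((TmulP x y).1.2.1⁻¹ * (TmulP x y).1.1)⁻¹ := by group
        _ = ((y.1.2.1⁻¹ * y.1.1) * (x.1.2.1⁻¹ * x.1.1))⁻¹ := congrArg Inv.inv (panti x y)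
        _ = (x.1.1⁻¹ * x.1.2.1) * (y.1.1⁻¹ * y.1.2.1) := by group
    · intro x y
      rw [cmgTP_iff']
      constructor
      · intro h
        have h2 : (x.1.1⁻¹ * x.1.2.1)⁻¹ = (y.1.1⁻¹ * y.1.2.1)⁻¹ := congrArg Inv.inv h
        calc x.1.2.1⁻¹ * x.1.1 = (x.1.1⁻¹ * x.1.2.1)⁻¹ := by group
          _ = (y.1.1⁻¹ * y.1.2.1)⁻¹ := h2
          _ = y.1.2.1⁻¹ * y.1.1 := by group
      · intro h
        have h2 : (x.1.2.1⁻¹ * x.1.1)⁻¹ = (y.1.2.1⁻¹ * y.1.1)⁻¹ := congrArg Inv.inv h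
        calc x.1.1⁻¹ * x.1.2.1 = (x.1.2.1⁻¹ * x.1.1)⁻¹ := by group
          _ = (y.1.2.1⁻¹ * y.1.1)⁻¹ := h2
          _ = y.1.1⁻¹ * y.1.2.1 := by group
end
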